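/- Endpoint alignment of the pivot: if u and v are linearly independent and w_f > 0 and w_r > 0, then g_eff ≠ 0, g_fid ≠ 0, and the pivoted direction at full intensity γ = 1 equals the normalized efficacy anchor: cos(φ)·g_fid/‖g_fid‖ + sin(φ)·u/‖u‖ = g_eff/‖g_eff‖. -/

import Mathlib

open Real InnerProductSpace

/-- Endpoint alignment of the pivot: at full intensity `γ = 1`, the pivoted direction
equals the normalized efficacy anchor. -/
theorem stmt_10 {E : Type*} [NormedAddCommGroup E] [InnerProductSpace ℝ E]
    (u v : E) (hu : u ≠ 0) (hv : v ≠ 0)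
    (hind : LinearIndependent ℝ ![u, v])
    (wf wr : ℝ) (hwf : 0 < wf) (hwr : 0 < wr)
    (t : E) (ht : t = wf • u + wr • v)
    (geff : E) (hgeff : geff = t - (⟪t, v⟫_ℝ / ‖v‖ ^ 2) • v)
    (gfid : E) (hgfid : gfid = t - (⟪t, u⟫_ℝ / ‖u‖ ^ 2) • u)
    (φ : ℝ) (hφ : φ = Real.arccos (⟪gfid, geff⟫_ℝ / (‖gfid‖ * ‖geff‖))) :
    geff ≠ 0 ∧ gfid ≠ 0 ∧
      Real.cos φ • (‖gfid‖⁻¹ • gfid) + Real.sin φ • (‖u‖⁻¹ • u) = ‖geff‖⁻¹ • geff := by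
  have huv : ⟪u, v⟫_ℝ = ⟪v, u⟫_ℝ := real_inner_comm v u
  have hnu : ‖u‖ ≠ 0 := norm_ne_zero_iff.mpr hu
  have hnv : ‖v‖ ≠ 0 := norm_ne_zero_iff.mpr hv
  set c : ℝ := ⟪u, v⟫_ℝ / ‖v‖ ^ 2 with hc
  set d : ℝ := ⟪u, v⟫_ℝ / ‖u‖ ^ 2 with hd
  have hgeff' : geff = wf • (u - c • v) := by
    rw [hgeff, ht]
    have h1 : ⟪wf • u + wr • v, v⟫_ℝ = wf * ⟪u, v⟫_ℝ + wr * ‖v‖ ^ 2 := by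
      rw [inner_add_left, real_inner_smul_left, real_inner_smul_left,
        real_inner_self_eq_norm_sq]
    rw [h1]
    have h2 : (wf * ⟪u, v⟫_ℝ + wr * ‖v‖ ^ 2) / ‖v‖ ^ 2 = wf * c + wr := by
      rw [hc]; field_simp
    rw [h2]
    module
  have hgfid' : gfid = wr • (v - d • u) := by
    rw [hgfid, ht]
    have h1 : ⟪wf • u + wr • v, u⟫_ℝ = wf * ‖u‖ ^ 2 + wr * ⟪u, v⟫_ℝ := by
      rw [inner_add_left, real_inner_smul_left, real_inner_smul_left,
        real_inner_self_eq_norm_sq, ← huv]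
    rw [h1]
    have h2 : (wf * ‖u‖ ^ 2 + wr * ⟪u, v⟫_ℝ) / ‖u‖ ^ 2 = wr * d + wf := by
      rw [hd]; field_simp; ring
    rw [h2]
    module
  rw [LinearIndependent.pair_iff] at hind
  have hP : u - c • v ≠ 0 := by
    intro h
    have := (hind 1 (-c) (by rw [neg_smul]; rw [sub_eq_add_neg] at h; simpa using h)).1
    norm_num at this
  have hQ : v - d • u ≠ 0 := by
    intro h
    have := (hind (-d) 1 (by
      rw [neg_smul]
      rw [sub_eq_add_neg] at h
      rw [add_comm]
      simpa using h)).2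
    norm_num at this
  have hgeffne : geff ≠ 0 := by
    rw [hgeff']; exact smul_ne_zero (ne_of_gt hwf) hP
  have hgfidne : gfid ≠ 0 := by
    rw [hgfid']; exact smul_ne_zero (ne_of_gt hwr) hQ
  refine ⟨hgeffne, hgfidne, ?_⟩
  have hN : (0:ℝ) < ‖gfid‖ := norm_pos_iff.mpr hgfidne
  have hM : (0:ℝ) < ‖geff‖ := norm_pos_iff.mpr hgeffne
  set α : ℝ := -(wf * c / wr) with hα
  set β : ℝ := wf * (1 - c * d) with hβ
  have hcomb : geff = α • gfid + β • u := by
    rw [hgeff', hgfid', smul_smul]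
    have : α * wr = -(wf * c) := by rw [hα]; field_simp
    rw [this]
    module
  have hperp : ⟪gfid, u⟫_ℝ = 0 := by
    rw [hgfid', real_inner_smul_left, inner_sub_left, real_inner_smul_left,
      real_inner_self_eq_norm_sq, hd, ← huv]
    field_simp
    ring
  have hA : ⟪gfid, geff⟫_ℝ = α * ‖gfid‖ ^ 2 := by
    rw [hcomb, inner_add_right, real_inner_smul_right, real_inner_smul_right,
      hperp, real_inner_self_eq_norm_sq]
    ring
  have hB : ⟪u, geff⟫_ℝ = β * ‖u‖ ^ 2 := by
    rw [hcomb, inner_add_right, real_inner_smul_right, real_inner_smul_right,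
      real_inner_self_eq_norm_sq, real_inner_comm gfid u, hperp]
    ring
  have hpyth : ‖geff‖ ^ 2 = α ^ 2 * ‖gfid‖ ^ 2 + β ^ 2 * ‖u‖ ^ 2 := by
    have h1 : ⟪geff, geff⟫_ℝ = α * ⟪geff, gfid⟫_ℝ + β * ⟪geff, u⟫_ℝ := by
      nth_rewrite 2 [hcomb]
      rw [inner_add_right, real_inner_smul_right, real_inner_smul_right]
    rw [real_inner_self_eq_norm_sq, real_inner_comm gfid geff, hA,
      real_inner_comm u geff, hB] at h1
    rw [h1]; ring
  have hβ0 : 0 ≤ β := by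
    have hcs : |⟪u, v⟫_ℝ| ≤ ‖u‖ * ‖v‖ := abs_real_inner_le_norm u v
    have hcd : c * d ≤ 1 := by
      rw [hc, hd, div_mul_div_comm, div_le_one (by positivity)]
      nlinarith [abs_nonneg (⟪u, v⟫_ℝ), sq_abs (⟪u, v⟫_ℝ)]
    rw [hβ]
    exact mul_nonneg hwf.le (by linarith)
  have hx : ⟪gfid, geff⟫_ℝ / (‖gfid‖ * ‖geff‖) = α * ‖gfid‖ / ‖geff‖ := by
    rw [hA]; field_simp
  have hxb : |⟪gfid, geff⟫_ℝ / (‖gfid‖ * ‖geff‖)| ≤ 1 := by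
    rw [abs_div, abs_of_pos (mul_pos hN hM), div_le_one (mul_pos hN hM)]
    exact abs_real_inner_le_norm gfid geff
  rw [abs_le] at hxb
  have hcos : Real.cos φ = α * ‖gfid‖ / ‖geff‖ := by
    rw [hφ, Real.cos_arccos hxb.1 hxb.2, hx]
  have hsin : Real.sin φ = β * ‖u‖ / ‖geff‖ := by
    rw [hφ, Real.sin_arccos, hx]
    have h1 : 1 - (α * ‖gfid‖ / ‖geff‖) ^ 2 = (β * ‖u‖ / ‖geff‖) ^ 2 := by
      field_simp
      linear_combination hpyth
    rw [h1, Real.sqrt_sq (by positivity)]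
  have key : ‖geff‖ • (Real.cos φ • (‖gfid‖⁻¹ • gfid) + Real.sin φ • (‖u‖⁻¹ • u)) =
      ‖geff‖ • (‖geff‖⁻¹ • geff) := by
    rw [smul_inv_smul₀ hM.ne']
    rw [hcos, hsin, smul_add, smul_smul, smul_smul, smul_smul, smul_smul]
    have e1 : ‖geff‖ * (α * ‖gfid‖ / ‖geff‖) * ‖gfid‖⁻¹ = α := by
      field_simp
    have e2 : ‖geff‖ * (β * ‖u‖ / ‖geff‖) * ‖u‖⁻¹ = β := by
      field_simp
    rw [e1, e2, ← hcomb]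
  exact smul_right_injective E hM.ne' key
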